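/- Let (x_α)_{α∈Λ^{<b}} be a summable family in a unital Banach algebra such that x_α x_β = x_β x_α for all α, β ∈ Λ. Then the family (exp x_α)_{α∈Λ^{<b}} is multipliable, and Π_{α∈Λ^{<b}} exp x_α = exp(Σ_{α∈Λ^{<b}} x_α). -/

import Mathlib

open Set

noncomputable section

/-- Transfinite partial sums of a family indexed by a well-ordered set `Λ` with
least element `a` and supremum `b`.  `F γ` represents `Σ_{α ∈ Λ, α < γ} x α` for
`γ ∈ Λ ∪ {b}`:  the sum over the empty initial segment is `0`, the successor
recursion `F (S β) = x β + F β` holds, and at each limit element the partial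
sums converge from the left. -/
def WOSumData {E : Type*} [SeminormedAddCommGroup E] {ι : Type*} [LinearOrder ι]
    (Λ : Set ι) (a b : ι) (x F : ι → E) : Prop :=
  F a = 0 ∧
  (∀ β ∈ Λ, ∀ γ ∈ Λ ∪ {b}, β < γ → (∀ α ∈ Λ, α ≤ β ∨ γ ≤ α) → F γ = x β + F β) ∧
  (∀ γ ∈ Λ ∪ {b}, a < γ → (∀ β ∈ Λ, β < γ → ∃ α ∈ Λ, β < α ∧ α < γ) →
    ∀ ε > 0, ∃ β₀ ∈ Λ, β₀ < γ ∧ ∀ β ∈ Λ, β₀ ≤ β → β < γ → ‖F β - F γ‖ < ε)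

/-- Transfinite partial products of a family indexed by a well-ordered set `Λ` with
least element `a` and supremum `b`.  `F γ` represents `Π_{α ∈ Λ, α < γ} x α` for
`γ ∈ Λ ∪ {b}`:  the product over the empty initial segment is `1`, the successor
recursion `F (S β) = x β * F β` holds, and at each limit element the partial
products converge from the left. -/
def WOProdData {E : Type*} [NormedRing E] {ι : Type*} [LinearOrder ι]
    (Λ : Set ι) (a b : ι) (x F : ι → E) : Prop :=
  F a = 1 ∧
  (∀ β ∈ Λ, ∀ γ ∈ Λ ∪ {b}, β < γ → (∀ α ∈ Λ, α ≤ β ∨ γ ≤ α) → F γ = x β * F β) ∧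
  (∀ γ ∈ Λ ∪ {b}, a < γ → (∀ β ∈ Λ, β < γ → ∃ α ∈ Λ, β < α ∧ α < γ) →
    ∀ ε > 0, ∃ β₀ ∈ Λ, β₀ < γ ∧ ∀ β ∈ Λ, β₀ ≤ β → β < γ → ‖F β - F γ‖ < ε)

/-- If a summable family of pairwise commuting elements in a unital Banach algebra
is given, then the family of exponentials is multipliable, and the product of the
exponentials is the exponential of the sum. -/
theorem stmt4 {E : Type*} [NormedRing E] [NormedAlgebra ℝ E] [CompleteSpace E] [NormOneClass E]
    {Λ : Set (WithTop ℝ)} {a b : WithTop ℝ} (hWF : Λ.IsWF)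
    (ha : IsLeast Λ a) (hb : IsLUB Λ b)
    (x F : WithTop ℝ → E) (hF : WOSumData Λ a b x F)
    (hcomm : ∀ α ∈ Λ, ∀ β ∈ Λ, x α * x β = x β * x α) :
    ∃ G : WithTop ℝ → E,
      WOProdData Λ a b (fun α => NormedSpace.exp (x α)) G ∧
      G b = NormedSpace.exp (F b) := by

  obtain ⟨hFa, hFsucc, hFlim⟩ := hF
  have hab : a ≤ b := hb.1 ha.1
  -- Key claim: every `x α` commutes with every partial sum `F γ`.
  have hwf : (Λ ∪ {b}).IsWF := hWF.union (Set.finite_singleton b).isWF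
  have key : ∀ γ ∈ Λ ∪ {b}, ∀ α ∈ Λ, Commute (x α) (F γ) := by
    intro γ hγ
    refine Set.WellFoundedOn.induction (P := fun γ => ∀ α ∈ Λ, Commute (x α) (F γ)) hwf hγ ?_
    intro γ hγ IH α hα
    by_cases hγa : γ = a
    · subst hγa; rw [hFa]; exact Commute.zero_right _
    · have haγ : a < γ := by
        rcases hγ with h | h
        · exact lt_of_le_of_ne (ha.2 h) (Ne.symm hγa)
        · rw [Set.mem_singleton_iff] at h; subst h
          exact lt_of_le_of_ne hab (Ne.symm hγa)
      by_cases hmax : ∃ β, β ∈ Λ ∧ β < γ ∧ ∀ δ ∈ Λ, δ < γ → δ ≤ β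
      · obtain ⟨β, hβ, hβγ, hβmax⟩ := hmax
        have hgap : ∀ δ ∈ Λ, δ ≤ β ∨ γ ≤ δ := by
          intro δ hδ
          rcases lt_or_ge δ γ with h | h
          · exact Or.inl (hβmax δ hδ h)
          · exact Or.inr h
        rw [hFsucc β hβ γ hγ hβγ hgap]
        exact (show Commute (x α) (x β) from hcomm α hα β hβ).add_right (IH β (Or.inl hβ) hβγ α hα)
      · push_neg at hmax
        have hdense : ∀ β ∈ Λ, β < γ → ∃ δ ∈ Λ, β < δ ∧ δ < γ := by
          intro β hβ hβγ
          obtain ⟨δ, hδ, hδγ, hβδ⟩ := hmax β hβ hβγ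
          exact ⟨δ, hδ, hβδ, hδγ⟩
        have hn : ∀ ε > (0:ℝ), ‖x α * F γ - F γ * x α‖ < ε := by
          intro ε hε
          have hM : (0:ℝ) < 2 * ‖x α‖ + 1 := by positivity
          set δ : ℝ := ε / (2 * ‖x α‖ + 1) with hδdef
          have hδ : 0 < δ := by positivity
          obtain ⟨β₀, hβ₀Λ, hβ₀γ, hβ₀⟩ := hFlim γ hγ haγ hdense δ hδ
          have hnd : ‖F γ - F β₀‖ < δ := by
            rw [norm_sub_rev]; exact hβ₀ β₀ hβ₀Λ le_rfl hβ₀γ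
          have hc' : x α * F β₀ = F β₀ * x α := IH β₀ (Or.inl hβ₀Λ) hβ₀γ α hα
          have heq : x α * F γ - F γ * x α
              = x α * (F γ - F β₀) - (F γ - F β₀) * x α := by
            rw [mul_sub, sub_mul, hc']; abel
          have h1 : ‖x α * F γ - F γ * x α‖ ≤ 2 * ‖x α‖ * ‖F γ - F β₀‖ := by
            rw [heq]
            calc ‖x α * (F γ - F β₀) - (F γ - F β₀) * x α‖
                ≤ ‖x α * (F γ - F β₀)‖ + ‖(F γ - F β₀) * x α‖ := norm_sub_le _ _
              _ ≤ ‖x α‖ * ‖F γ - F β₀‖ + ‖F γ - F β₀‖ * ‖x α‖ :=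
                  add_le_add (norm_mul_le _ _) (norm_mul_le _ _)
              _ = 2 * ‖x α‖ * ‖F γ - F β₀‖ := by ring
          have hδε : δ * (2 * ‖x α‖ + 1) = ε := by
            rw [hδdef, div_mul_cancel₀ _ (ne_of_gt hM)]
          nlinarith [norm_nonneg (x α), norm_nonneg (F γ - F β₀)]
        have : x α * F γ - F γ * x α = 0 := by
          by_contra h
          have h0 : 0 < ‖x α * F γ - F γ * x α‖ :=
            lt_of_le_of_ne (norm_nonneg _) (Ne.symm (norm_ne_zero_iff.mpr h))
          exact lt_irrefl _ (hn _ h0)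
        exact sub_eq_zero.mp this
  let +nondep : NormedAlgebra ℚ E := .restrictScalars ℚ ℝ E
  refine ⟨fun γ => NormedSpace.exp (F γ), ⟨?_, ?_, ?_⟩, rfl⟩
  · simp [hFa, NormedSpace.exp_zero]
  · intro β hβ γ hγ hβγ hgap
    dsimp only
    rw [hFsucc β hβ γ hγ hβγ hgap,
      NormedSpace.exp_add_of_commute (key β (Or.inl hβ) β hβ)]
  · intro γ hγ haγ hdense ε hε
    have hc : ContinuousAt (NormedSpace.exp (𝔸 := E)) (F γ) :=
      NormedSpace.exp_continuous.continuousAt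
    obtain ⟨δ, hδ, hδc⟩ := Metric.continuousAt_iff.mp hc ε hε
    obtain ⟨β₀, hβ₀Λ, hβ₀γ, hβ₀⟩ := hFlim γ hγ haγ hdense δ hδ
    refine ⟨β₀, hβ₀Λ, hβ₀γ, fun β hβ hle hlt => ?_⟩
    have : dist (F β) (F γ) < δ := by
      rw [dist_eq_norm]; exact hβ₀ β hβ hle hlt
    have := hδc this
    rwa [dist_eq_norm] at this
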